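/- For z > 0 and n ≥ 1, the self-avoiding walk susceptibility on K_n satisfies χ_z^{(n)} = z^{n-1} e^{1/z} Γ(n, 1/z), where Γ is the upper incomplete gamma function. -/

import Mathlib

open MeasureTheory Finset

/-- `c_N^{(n)} = (n-1)!/(n-1-N)!`, the number of `N`-step self-avoiding walks on `K_n`. -/
noncomputable def sawCount (n N : ℕ) : ℝ :=
  (Nat.factorial (n - 1) : ℝ) / (Nat.factorial (n - 1 - N) : ℝ)

/-- The susceptibility `χ_z^{(n)} = ∑_{N=0}^{n-1} c_N^{(n)} z^N`. -/
noncomputable def chi (n : ℕ) (z : ℝ) : ℝ :=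
  ∑ N ∈ Finset.range n, sawCount n N * z ^ N

/-- The upper incomplete gamma function `Γ(s,x) = ∫_x^∞ t^{s-1} e^{-t} dt`. -/
noncomputable def upperGamma (s x : ℝ) : ℝ :=
  ∫ t in Set.Ioi x, t ^ (s - 1) * Real.exp (-t)

noncomputable def gAux (k : ℕ) (x : ℝ) : ℝ :=
  ∫ t in Set.Ioi x, t ^ k * Real.exp (-t)

lemma gAux_integrable (k : ℕ) {x : ℝ} (hx : 0 < x) :
    IntegrableOn (fun t : ℝ => t ^ k * Real.exp (-t)) (Set.Ioi x) := by
  have h := Real.GammaIntegral_convergent (s := (k : ℝ) + 1) (by positivity)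
  have h2 := h.mono_set (Set.Ioi_subset_Ioi hx.le)
  refine h2.congr_fun ?_ measurableSet_Ioi
  intro t ht
  simp [Real.rpow_natCast, mul_comm]

lemma gAux_zero (x : ℝ) : gAux 0 x = Real.exp (-x) := by
  simpa [gAux] using integral_exp_neg_Ioi x

lemma gAux_succ (k : ℕ) {x : ℝ} (hx : 0 < x) :
    gAux (k + 1) x = (k + 1) * gAux k x + x ^ (k + 1) * Real.exp (-x) := by
  set f : ℝ → ℝ := fun t => -(t ^ (k + 1) * Real.exp (-t)) with hf
  set f' : ℝ → ℝ := fun t => t ^ (k + 1) * Real.exp (-t) - (k + 1) * (t ^ k * Real.exp (-t))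
    with hf'
  have hderiv : ∀ t ∈ Set.Ioi x, HasDerivAt f (f' t) t := by
    intro t _
    have h1 : HasDerivAt (fun t : ℝ => t ^ (k + 1)) ((k + 1) * t ^ k) t := by
      simpa using hasDerivAt_pow (k + 1) t
    have h2 : HasDerivAt (fun t : ℝ => Real.exp (-t)) (-Real.exp (-t)) t := by
      simpa [Function.comp_def] using (Real.hasDerivAt_exp (-t)).comp t (hasDerivAt_neg t)
    have := (h1.mul h2).neg
    refine this.congr_deriv ?_
    simp only [hf']
    ring
  have hint1 := gAux_integrable (k + 1) hx
  have hint0 := gAux_integrable k hx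
  have hintf' : IntegrableOn f' (Set.Ioi x) := hint1.sub (hint0.const_mul _)
  have htend : Filter.Tendsto f Filter.atTop (nhds 0) := by
    have := (Real.tendsto_pow_mul_exp_neg_atTop_nhds_zero (k + 1)).neg
    simpa [hf] using this
  have hcont : ContinuousWithinAt f (Set.Ici x) x := by
    apply Continuous.continuousWithinAt
    continuity
  have key := integral_Ioi_of_hasDerivAt_of_tendsto hcont hderiv hintf' htend
  have hsplit : ∫ t in Set.Ioi x, f' t =
      gAux (k + 1) x - (k + 1) * gAux k x := by
    simp only [hf']
    rw [integral_sub hint1 (hint0.const_mul _), integral_const_mul]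
    rfl
  rw [hsplit] at key
  have hfx : f x = -(x ^ (k + 1) * Real.exp (-x)) := rfl
  rw [hfx] at key
  linarith

lemma upperGamma_eq_gAux (n : ℕ) (hn : 1 ≤ n) (x : ℝ) :
    upperGamma n x = gAux (n - 1) x := by
  unfold upperGamma gAux
  apply setIntegral_congr_fun measurableSet_Ioi
  intro t _
  have hc : (n : ℝ) - 1 = ((n - 1 : ℕ) : ℝ) := by
    rw [Nat.cast_sub hn]; norm_num
  simp only [hc, Real.rpow_natCast]

lemma chi_succ (n : ℕ) (hn : 1 ≤ n) (z : ℝ) :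
    chi (n + 1) z = 1 + n * z * chi n z := by
  obtain ⟨m, rfl⟩ : ∃ m, n = m + 1 := ⟨n - 1, by omega⟩
  unfold chi
  rw [Finset.sum_range_succ']
  have h0 : sawCount (m + 1 + 1) 0 * z ^ 0 = 1 := by
    simp only [sawCount, Nat.sub_zero, pow_zero, mul_one]
    rw [div_self]
    exact_mod_cast Nat.factorial_ne_zero _
  rw [h0, add_comm]
  congr 1
  rw [Finset.mul_sum]
  apply Finset.sum_congr rfl
  intro i _
  have hsaw : sawCount (m + 1 + 1) (i + 1) = (m + 1) * sawCount (m + 1) i := by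
    unfold sawCount
    have hsub : m + 1 + 1 - 1 - (i + 1) = m + 1 - 1 - i := by omega
    rw [hsub, show m + 1 + 1 - 1 = m + 1 from rfl, Nat.factorial_succ]
    push_cast
    ring
  rw [hsaw]
  push_cast
  ring

theorem chi_eq_upperGamma (n : ℕ) (hn : 1 ≤ n) (z : ℝ) (hz : 0 < z) :
    chi n z = z ^ (n - 1) * Real.exp (1 / z) * upperGamma n (1 / z) := by
  have hx : 0 < 1 / z := by positivity
  induction n, hn using Nat.le_induction with
  | base =>
    rw [upperGamma_eq_gAux 1 le_rfl, gAux_zero]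
    simp [chi, sawCount, ← Real.exp_add]
  | succ n hn ih =>
    rw [chi_succ n hn z, ih]
    rw [upperGamma_eq_gAux (n + 1) (by omega), upperGamma_eq_gAux n hn]
    have hn1 : n - 1 + 1 = n := by omega
    have hcast : ((n - 1 : ℕ) : ℝ) + 1 = (n : ℝ) := by exact_mod_cast hn1
    have hrec : gAux n (1 / z) =
        n * gAux (n - 1) (1 / z) + (1 / z) ^ n * Real.exp (-(1 / z)) := by
      conv_lhs => rw [← hn1]
      rw [gAux_succ (n - 1) hx, hn1, hcast]
    rw [show n + 1 - 1 = n from rfl, hrec]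
    have hzx : z ^ n * (1 / z) ^ n = 1 := by
      rw [← mul_pow, mul_one_div, div_self hz.ne', one_pow]
    have hzz : z * z ^ (n - 1) = z ^ n := by
      rw [← pow_succ', hn1]
    have hee : Real.exp (1 / z) * Real.exp (-(1 / z)) = 1 := by
      rw [← Real.exp_add, add_neg_cancel, Real.exp_zero]
    have key : z ^ n * Real.exp (1 / z) * ((1 / z) ^ n * Real.exp (-(1 / z))) = 1 := by
      calc z ^ n * Real.exp (1 / z) * ((1 / z) ^ n * Real.exp (-(1 / z)))
          = (z ^ n * (1 / z) ^ n) * (Real.exp (1 / z) * Real.exp (-(1 / z))) := by ring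
        _ = 1 := by rw [hzx, hee, mul_one]
    calc 1 + n * z * (z ^ (n - 1) * Real.exp (1 / z) * gAux (n - 1) (1 / z))
        = 1 + n * (z * z ^ (n - 1)) * Real.exp (1 / z) * gAux (n - 1) (1 / z) := by ring
      _ = z ^ n * Real.exp (1 / z) *
          (n * gAux (n - 1) (1 / z) + (1 / z) ^ n * Real.exp (-(1 / z))) := by
          rw [hzz]; linear_combination -key
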